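/- Let a ∈ (1/2, 2/3], p ∈ (0,1), and n ≥ 1 an integer. Define the operator P₂ on functions of bounded variation on [0, 1/(1−a)] by P₂f(x) = p·(f(a x + 1) − f(1)) + q·1{x ≥ 1/a}·(f(a x − 1) − f(0)). Then for every function f of bounded variation on [0, 1/(1−a)]: ‖P₂^n f‖ ≤ p^n · sup{(q/p)^{L_n(x)} : x ∈ [0, 1/(1−a)], κ_a(x) ≥ n} · ‖f‖, where ‖f‖ = |f(0)| + Var(f) and Var(f) is the total variation of f on [0, 1/(1−a)]. -/

import Mathlib

open MeasureTheory Filter Set ProbabilityTheory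
open scoped ENNReal Classical Topology

noncomputable section

/-- The map `T_a` (extended to a total function; on the paper's domain it agrees with `T_a`,
and `T_{2/3}(1) = 0`). -/
def Tmap (a x : ℝ) : ℝ := if x < 1 then (x + 1) / a else (x - 1) / a

/-- `κ_a(x) ∈ ℕ∞`: the first entry time of the orbit of `x` under `T_a` into the hole
`I_a = ((2a-1)/(1-a), 1)`. -/
def kappa (a x : ℝ) : ℕ∞ :=
  ⨅ (k : ℕ) (_ : (Tmap a)^[k] x ∈ Set.Ioo ((2 * a - 1) / (1 - a)) 1), (k : ℕ∞)

/-- `δ_k(x)` -/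
def deltaF (a x : ℝ) (k : ℕ) : ℝ := if (Tmap a)^[k] x < 1 then 1 else 0

/-- `L_k(x)` -/
def Lnat (a x : ℝ) (k : ℕ) : ℕ :=
  ((Finset.range k).filter fun i => (Tmap a)^[i] x < 1).card

/-- the `k`-th term of the series `∑_{k=0}^{κ_a(x)} δ_k(x) (p/λ)^{k+1} (q/p)^{L_k(x)}` -/
def lamTerm (a p x lam : ℝ) (k : ℕ) : ℝ :=
  if (k : ℕ∞) ≤ kappa a x then
    deltaF a x k * (p / lam) ^ (k + 1) * ((1 - p) / p) ^ (Lnat a x k)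
  else 0

/-- `λ` is a positive solution of the equation defining `λ_a`. -/
def IsLamSol (a p lam : ℝ) : Prop := 0 < lam ∧ HasSum (lamTerm a p 0 lam) 1

/-- `V(x) = ∑_{k=0}^{κ_a} (p/λ_a)^k (q/p)^{L_k} 1{T_a^k(0) ≤ x}` -/
def Vfun (a p lam x : ℝ) : ℝ :=
  ∑' k : ℕ, if (k : ℕ∞) ≤ kappa a 0 ∧ (Tmap a)^[k] 0 ≤ x then
    (p / lam) ^ k * ((1 - p) / p) ^ (Lnat a 0 k) else 0

/-- `F̄_a(y) = ∑_{k=0}^{κ_a(y)} δ_k(y) (p/λ_a)^{k+1} (q/p)^{L_k(y)}`. -/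
def Fbar (a p lam y : ℝ) : ℝ := ∑' k, lamTerm a p y lam k

/-- The operator `P₂`. -/
def P2op (a p : ℝ) (f : ℝ → ℝ) : ℝ → ℝ := fun x =>
  p * (f (a * x + 1) - f 1) + (1 - p) * (if 1 / a ≤ x then f (a * x - 1) - f 0 else 0)

/-- The norm `‖f‖ = |f(0)| + Var(f)` on functions of bounded variation on `[0, 1/(1-a)]`. -/
def BVnorm (a : ℝ) (f : ℝ → ℝ) : ℝ :=
  |f 0| + (eVariationOn f (Set.Icc (0 : ℝ) (1 / (1 - a)))).toReal

lemma edist_real (x y : ℝ) : edist x y = ENNReal.ofReal |x - y| := by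
  rw [edist_dist, Real.dist_eq]

lemma evar_smul_le (c : ℝ) (g : ℝ → ℝ) (s : Set ℝ) :
    eVariationOn (fun x => c * g x) s ≤ ENNReal.ofReal |c| * eVariationOn g s := by
  refine iSup_le ?_
  rintro ⟨n, u, hu, us⟩
  calc ∑ i ∈ Finset.range n, edist (c * g (u (i+1))) (c * g (u i))
      = ENNReal.ofReal |c| * ∑ i ∈ Finset.range n, edist (g (u (i+1))) (g (u i)) := by
        rw [Finset.mul_sum]
        refine Finset.sum_congr rfl fun i _ => ?_
        rw [edist_real, edist_real, ← ENNReal.ofReal_mul (abs_nonneg c), ← abs_mul,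
          mul_sub]
    _ ≤ ENNReal.ofReal |c| * eVariationOn g s := by
        gcongr
        exact eVariationOn.sum_le (f := g) (n := n) hu us

lemma evar_add_le (g h : ℝ → ℝ) (s : Set ℝ) :
    eVariationOn (fun x => g x + h x) s ≤ eVariationOn g s + eVariationOn h s := by
  refine iSup_le ?_
  rintro ⟨n, u, hu, us⟩
  calc ∑ i ∈ Finset.range n, edist (g (u (i+1)) + h (u (i+1))) (g (u i) + h (u i))
      ≤ ∑ i ∈ Finset.range n,
          (edist (g (u (i+1))) (g (u i)) + edist (h (u (i+1))) (h (u i))) := by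
        refine Finset.sum_le_sum fun i _ => ?_
        rw [edist_real, edist_real, edist_real, ← ENNReal.ofReal_add (abs_nonneg _) (abs_nonneg _)]
        refine ENNReal.ofReal_le_ofReal ?_
        have : g (u (i+1)) + h (u (i+1)) - (g (u i) + h (u i))
            = (g (u (i+1)) - g (u i)) + (h (u (i+1)) - h (u i)) := by ring
        rw [this]
        exact abs_add_le _ _
    _ = (∑ i ∈ Finset.range n, edist (g (u (i+1))) (g (u i)))
        + ∑ i ∈ Finset.range n, edist (h (u (i+1))) (h (u i)) := Finset.sum_add_distrib
    _ ≤ _ := add_le_add (eVariationOn.sum_le (f := g) (n := n) hu us) (eVariationOn.sum_le (f := h) (n := n) hu us)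

lemma evar_const_on (g : ℝ → ℝ) (s : Set ℝ) (c : ℝ) (h : ∀ x ∈ s, g x = c) :
    eVariationOn g s = 0 := by
  refine eVariationOn.constant_on ?_
  rintro x ⟨x', hx', rfl⟩ y ⟨y', hy', rfl⟩
  rw [h x' hx', h y' hy']

lemma evar_sub_const (g : ℝ → ℝ) (c : ℝ) (s : Set ℝ) :
    eVariationOn (fun x => g x - c) s = eVariationOn g s := by
  dsimp only [eVariationOn]
  congr 1 with p : 1
  congr 1 with i : 1
  rw [edist_real, edist_real]
  ring_nf

lemma image_affine_Icc {a k u v : ℝ} (ha : 0 < a) (huv : u ≤ v) :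
    (fun x => a * x + k) '' Icc u v = Icc (a*u+k) (a*v+k) := by
  ext z
  constructor
  · rintro ⟨x, ⟨hx1, hx2⟩, rfl⟩
    refine ⟨?_, ?_⟩ <;> simp only [] <;> nlinarith
  · rintro ⟨hz1, hz2⟩
    refine ⟨(z - k)/a, ⟨?_, ?_⟩, by field_simp; ring⟩
    · rw [le_div_iff₀ ha]; nlinarith
    · rw [div_le_iff₀ ha]; nlinarith

lemma evar_comp_affine (g : ℝ → ℝ) {a : ℝ} (ha : 0 < a) (k u v : ℝ) :
    eVariationOn (fun x => g (a * x + k)) (Icc u v) =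
      eVariationOn g (Icc (a*u+k) (a*v+k)) := by
  rcases le_or_gt u v with huv | huv
  · have := eVariationOn.comp_eq_of_monotoneOn g (fun x => a * x + k)
      (t := Icc u v) (fun x hx y hy hxy => by simp only []; nlinarith)
    rw [Function.comp_def] at this
    rw [this, image_affine_Icc ha huv]
  · rw [eVariationOn.subsingleton, eVariationOn.subsingleton]
    · exact Set.subsingleton_Icc_of_ge (by nlinarith)
    · exact Set.subsingleton_Icc_of_ge huv.le
lemma evar_P2_le (a p : ℝ) (ha1 : 1/2 < a) (hp1 : 0 < p) (hp2 : p < 1)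
    (g : ℝ → ℝ) (u v : ℝ) :
    eVariationOn (P2op a p g) (Icc u v) ≤
      ENNReal.ofReal p * eVariationOn g (Icc (a*u+1) (a*v+1)) +
      ENNReal.ofReal (1-p) * eVariationOn g (Icc (a * max u (1/a) - 1) (a*v-1)) := by
  have h0a : 0 < a := by linarith
  have hai : a * (1/a) = 1 := by field_simp
  have hg1 : ∀ s : Set ℝ, eVariationOn (fun x => p * (g (a*x+1) - g 1)) (Icc u v)
      ≤ ENNReal.ofReal p * eVariationOn g (Icc (a*u+1) (a*v+1)) := by
    intro s
    calc eVariationOn (fun x => p * (g (a*x+1) - g 1)) (Icc u v)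
        ≤ ENNReal.ofReal |p| * eVariationOn (fun x => g (a*x+1) - g 1) (Icc u v) :=
          evar_smul_le p _ _
      _ = ENNReal.ofReal p * eVariationOn (fun x => g (a*x+1)) (Icc u v) := by
          rw [abs_of_pos hp1, evar_sub_const]
      _ = ENNReal.ofReal p * eVariationOn g (Icc (a*u+1) (a*v+1)) := by
          rw [evar_comp_affine g h0a 1 u v]
  have hg2 : eVariationOn
      (fun x => (1-p) * (if 1/a ≤ x then g (a*x-1) - g 0 else 0)) (Icc u v)
      ≤ ENNReal.ofReal (1-p) * eVariationOn g (Icc (a * max u (1/a) - 1) (a*v-1)) := by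
    rcases lt_or_ge v u with hvu | huv
    · rw [eVariationOn.subsingleton _ (Set.subsingleton_Icc_of_ge hvu.le)]
      exact zero_le
    rcases lt_or_ge v (1/a) with hva | hav
    · rw [evar_const_on _ _ 0 (fun x hx => by
        rw [if_neg (by push_neg; exact lt_of_le_of_lt hx.2 hva)]; ring)]
      exact zero_le
    · set r := max u (1/a) with hr
      have hur : u ≤ r := le_max_left _ _
      have hrv : r ≤ v := max_le huv hav
      set g2 := fun x => (1-p) * (if 1/a ≤ x then g (a*x-1) - g 0 else 0) with hg2def
      have key : eVariationOn g2 (Icc u r) + eVariationOn g2 (Icc r v)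
          = eVariationOn g2 (Icc u v) := by
        have := eVariationOn.Icc_add_Icc g2 (s := (Set.univ : Set ℝ)) hur hrv trivial
        simpa using this
      have h1 : eVariationOn g2 (Icc u r) = 0 := by
        rcases le_or_gt u (1/a) with hu1 | hu1
        · have hrr : r = 1/a := max_eq_right hu1
          refine evar_const_on _ _ 0 (fun x hx => ?_)
          rcases lt_or_ge x (1/a) with hx1 | hx1
          · rw [hg2def]; simp only [if_neg (not_le.mpr hx1)]; ring
          · have hxe : x = 1/a := le_antisymm (hrr ▸ hx.2) hx1
            rw [hg2def]; simp only [hxe, if_pos le_rfl, hai]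
            norm_num
        · have hrr : r = u := max_eq_left hu1.le
          rw [hrr, eVariationOn.subsingleton _ (Set.subsingleton_Icc_of_ge le_rfl)]
      have h2 : eVariationOn g2 (Icc r v)
          ≤ ENNReal.ofReal (1-p) * eVariationOn g (Icc (a*r-1) (a*v-1)) := by
        have heq : eVariationOn g2 (Icc r v)
            = eVariationOn (fun x => (1-p) * (g (a*x-1) - g 0)) (Icc r v) := by
          refine eVariationOn.eq_of_eqOn (fun x hx => ?_)
          have : (1/a : ℝ) ≤ x := le_trans (le_max_right _ _) hx.1
          rw [hg2def]; simp only [if_pos this]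
        rw [heq]
        calc eVariationOn (fun x => (1-p) * (g (a*x-1) - g 0)) (Icc r v)
            ≤ ENNReal.ofReal |1-p| * eVariationOn (fun x => g (a*x-1) - g 0) (Icc r v) :=
              evar_smul_le _ _ _
          _ = ENNReal.ofReal (1-p) * eVariationOn (fun x => g (a*x-1)) (Icc r v) := by
              rw [abs_of_pos (by linarith), evar_sub_const]
          _ ≤ ENNReal.ofReal (1-p) * eVariationOn g (Icc (a*r-1) (a*v-1)) := by
              have : eVariationOn (fun x => g (a*x-1)) (Icc r v)
                  = eVariationOn g (Icc (a*r + (-1)) (a*v + (-1))) := by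
                have := evar_comp_affine g h0a (-1) r v
                convert this using 3 <;> ring
              rw [this]
              apply le_of_eq
              congr 2 <;> ring
      calc eVariationOn g2 (Icc u v) = eVariationOn g2 (Icc u r) + eVariationOn g2 (Icc r v) :=
            key.symm
        _ = eVariationOn g2 (Icc r v) := by rw [h1, zero_add]
        _ ≤ _ := h2
  calc eVariationOn (P2op a p g) (Icc u v)
      ≤ eVariationOn (fun x => p * (g (a*x+1) - g 1)) (Icc u v)
        + eVariationOn (fun x => (1-p) * (if 1/a ≤ x then g (a*x-1) - g 0 else 0)) (Icc u v) := by
        have : P2op a p g = fun x => (fun x => p * (g (a*x+1) - g 1)) x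
            + (fun x => (1-p) * (if 1/a ≤ x then g (a*x-1) - g 0 else 0)) x := rfl
        rw [this]
        exact evar_add_le _ _ _
    _ ≤ _ := add_le_add (hg1 Set.univ) hg2
def step0 (a : ℝ) (I : ℝ × ℝ) : ℝ × ℝ := (a * I.1 + 1, a * I.2 + 1)
def step1 (a : ℝ) (I : ℝ × ℝ) : ℝ × ℝ := (a * max I.1 (1/a) - 1, a * I.2 - 1)

def famP (a : ℝ) : ℕ → ℝ × ℝ → ℕ → ℝ × ℝ
  | 0, I, _ => I
  | n+1, I, k => if k % 2 = 0 then famP a n (step1 a I) (k/2) else famP a n (step0 a I) (k/2)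

def famL (a : ℝ) : ℕ → ℝ × ℝ → ℕ → ℕ
  | 0, _, _ => 0
  | n+1, I, k => if k % 2 = 0 then famL a n (step1 a I) (k/2) + 1 else famL a n (step0 a I) (k/2)

lemma famL_le (a : ℝ) : ∀ (n : ℕ) (I : ℝ × ℝ) (k : ℕ), famL a n I k ≤ n := by
  intro n
  induction n with
  | zero => intro I k; simp [famL]
  | succ n ih =>
    intro I k
    rw [famL]
    split
    · exact Nat.succ_le_succ (ih _ _)
    · exact le_trans (ih _ _) (Nat.le_succ n)

lemma sum_range_even_odd {M : Type*} [AddCommMonoid M] (F : ℕ → M) (N : ℕ) :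
    ∑ k ∈ Finset.range (2*N), F k
      = (∑ k ∈ Finset.range N, F (2*k)) + ∑ k ∈ Finset.range N, F (2*k+1) := by
  induction N with
  | zero => simp
  | succ N ih =>
    have h2 : 2*(N+1) = (2*N+1)+1 := by ring
    rw [h2, Finset.sum_range_succ, Finset.sum_range_succ, Finset.sum_range_succ,
      Finset.sum_range_succ, ih]
    ring_nf
    abel

lemma claimA (a p : ℝ) (ha1 : 1/2 < a) (hp1 : 0 < p) (hp2 : p < 1) (f : ℝ → ℝ) :
    ∀ (n : ℕ) (u v : ℝ),
    eVariationOn ((P2op a p)^[n] f) (Icc u v)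
      ≤ ∑ k ∈ Finset.range (2^n),
          ENNReal.ofReal (p^(n - famL a n (u,v) k) * (1-p)^(famL a n (u,v) k)) *
            eVariationOn f (Icc (famP a n (u,v) k).1 (famP a n (u,v) k).2) := by
  intro n
  induction n with
  | zero =>
    intro u v
    simp [famP, famL]
  | succ n ih =>
    intro u v
    have hit : (P2op a p)^[n+1] f = P2op a p ((P2op a p)^[n] f) :=
      Function.iterate_succ_apply' _ _ _
    rw [hit]
    refine le_trans (evar_P2_le a p ha1 hp1 hp2 _ u v) ?_
    have hE0 := ih (a*u+1) (a*v+1)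
    have hE1 := ih (a * max u (1/a) - 1) (a*v-1)
    have hsplit : ∑ k ∈ Finset.range (2^(n+1)),
        ENNReal.ofReal (p^((n+1) - famL a (n+1) (u,v) k) * (1-p)^(famL a (n+1) (u,v) k)) *
          eVariationOn f (Icc (famP a (n+1) (u,v) k).1 (famP a (n+1) (u,v) k).2)
        = (∑ k ∈ Finset.range (2^n),
            ENNReal.ofReal (1-p) *
              (ENNReal.ofReal (p^(n - famL a n (step1 a (u,v)) k) *
                (1-p)^(famL a n (step1 a (u,v)) k)) *
              eVariationOn f (Icc (famP a n (step1 a (u,v)) k).1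
                (famP a n (step1 a (u,v)) k).2)))
          + ∑ k ∈ Finset.range (2^n),
            ENNReal.ofReal p *
              (ENNReal.ofReal (p^(n - famL a n (step0 a (u,v)) k) *
                (1-p)^(famL a n (step0 a (u,v)) k)) *
              eVariationOn f (Icc (famP a n (step0 a (u,v)) k).1
                (famP a n (step0 a (u,v)) k).2)) := by
      have h2 : (2:ℕ)^(n+1) = 2 * 2^n := by rw [pow_succ]; ring
      rw [h2, sum_range_even_odd]
      congr 1
      · refine Finset.sum_congr rfl fun k _ => ?_
        have he : (2*k) % 2 = 0 := by omega
        have hd : (2*k) / 2 = k := by omega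
        rw [famP, famL, if_pos he, if_pos he, hd]
        have hlle := famL_le a n (step1 a (u,v)) k
        have hexp : (n+1) - (famL a n (step1 a (u,v)) k + 1) = n - famL a n (step1 a (u,v)) k := by
          omega
        rw [hexp, pow_succ]
        rw [show p ^ (n - famL a n (step1 a (u,v)) k) *
            ((1 - p) ^ famL a n (step1 a (u,v)) k * (1 - p))
          = (1-p) * (p ^ (n - famL a n (step1 a (u,v)) k) *
            (1 - p) ^ famL a n (step1 a (u,v)) k) by ring]
        rw [ENNReal.ofReal_mul (by linarith), mul_assoc]
      · refine Finset.sum_congr rfl fun k _ => ?_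
        have he : ¬((2*k+1) % 2 = 0) := by omega
        have hd : (2*k+1) / 2 = k := by omega
        rw [famP, famL, if_neg he, if_neg he, hd]
        have hlle := famL_le a n (step0 a (u,v)) k
        have hexp : (n+1) - famL a n (step0 a (u,v)) k
            = (n - famL a n (step0 a (u,v)) k) + 1 := by omega
        rw [hexp, pow_succ]
        rw [show p ^ (n - famL a n (step0 a (u,v)) k) * p *
            (1 - p) ^ famL a n (step0 a (u,v)) k
          = p * (p ^ (n - famL a n (step0 a (u,v)) k) *
            (1 - p) ^ famL a n (step0 a (u,v)) k) by ring]
        rw [ENNReal.ofReal_mul (by linarith), mul_assoc]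
    rw [hsplit]
    rw [← Finset.mul_sum, ← Finset.mul_sum]
    have hgoal1 : ENNReal.ofReal p * eVariationOn ((P2op a p)^[n] f) (Icc (a*u+1) (a*v+1))
        ≤ ENNReal.ofReal p * ∑ k ∈ Finset.range (2^n),
            ENNReal.ofReal (p^(n - famL a n (step0 a (u,v)) k) *
              (1-p)^(famL a n (step0 a (u,v)) k)) *
            eVariationOn f (Icc (famP a n (step0 a (u,v)) k).1 (famP a n (step0 a (u,v)) k).2) :=
      mul_le_mul_right (by exact hE0) _
    have hgoal2 : ENNReal.ofReal (1-p) *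
        eVariationOn ((P2op a p)^[n] f) (Icc (a * max u (1/a) - 1) (a*v-1))
        ≤ ENNReal.ofReal (1-p) * ∑ k ∈ Finset.range (2^n),
            ENNReal.ofReal (p^(n - famL a n (step1 a (u,v)) k) *
              (1-p)^(famL a n (step1 a (u,v)) k)) *
            eVariationOn f (Icc (famP a n (step1 a (u,v)) k).1 (famP a n (step1 a (u,v)) k).2) :=
      mul_le_mul_right (by exact hE1) _
    calc ENNReal.ofReal p * eVariationOn ((P2op a p)^[n] f) (Icc (a*u+1) (a*v+1))
          + ENNReal.ofReal (1-p) *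
            eVariationOn ((P2op a p)^[n] f) (Icc (a * max u (1/a) - 1) (a*v-1))
        ≤ _ := add_le_add hgoal1 hgoal2
      _ = _ := add_comm _ _
section Aux
variable {a : ℝ}

lemma bb_fact (ha1 : 1/2 < a) (ha2 : a ≤ 2/3) :
    0 < a ∧ a < 1 ∧ 0 < 1 - a ∧ a * (1/(1-a)) + 1 = 1/(1-a) ∧
    a * (1/(1-a)) - 1 = (2*a-1)/(1-a) ∧ (2*a-1)/(1-a) ≤ 1 ∧ 1 ≤ 1/a ∧
    a * (1/a) = 1 ∧ (1:ℝ) ≤ 1/(1-a) := by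
  have h0 : 0 < a := by linarith
  have h1 : a < 1 := by linarith
  have h2 : 0 < 1 - a := by linarith
  refine ⟨h0, h1, h2, by field_simp; ring, by field_simp; ring, ?_, ?_, by field_simp, ?_⟩
  · rw [div_le_one h2]; linarith
  · rw [le_div_iff₀ h0]; linarith
  · rw [le_div_iff₀ h2]; linarith

lemma step0_bounds (ha1 : 1/2 < a) (ha2 : a ≤ 2/3) {I : ℝ × ℝ}
    (h1 : 0 ≤ I.1) (h2 : I.2 ≤ 1/(1-a)) :
    0 ≤ (step0 a I).1 ∧ (step0 a I).2 ≤ 1/(1-a) := by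
  obtain ⟨h0, ha, hma, hb1, hb2, hc1, hia, haa, hbb⟩ := bb_fact ha1 ha2
  constructor
  · simp only [step0]; nlinarith
  · simp only [step0]; nlinarith

lemma step1_bounds (ha1 : 1/2 < a) (ha2 : a ≤ 2/3) {I : ℝ × ℝ}
    (h1 : 0 ≤ I.1) (h2 : I.2 ≤ 1/(1-a)) :
    0 ≤ (step1 a I).1 ∧ (step1 a I).2 ≤ 1/(1-a) := by
  obtain ⟨h0, ha, hma, hb1, hb2, hc1, hia, haa, hbb⟩ := bb_fact ha1 ha2
  constructor
  · simp only [step1]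
    have : a * (1/a) ≤ a * max I.1 (1/a) :=
      mul_le_mul_of_nonneg_left (le_max_right _ _) h0.le
    nlinarith
  · simp only [step1]; nlinarith

lemma famP_bounds (ha1 : 1/2 < a) (ha2 : a ≤ 2/3) :
    ∀ (n : ℕ) (I : ℝ × ℝ) (k : ℕ), 0 ≤ I.1 → I.2 ≤ 1/(1-a) →
    0 ≤ (famP a n I k).1 ∧ (famP a n I k).2 ≤ 1/(1-a) := by
  intro n
  induction n with
  | zero => intro I k h1 h2; exact ⟨h1, h2⟩
  | succ n ih =>
    intro I k h1 h2
    rw [famP]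
    split
    · exact ih _ _ (step1_bounds ha1 ha2 h1 h2).1 (step1_bounds ha1 ha2 h1 h2).2
    · exact ih _ _ (step0_bounds ha1 ha2 h1 h2).1 (step0_bounds ha1 ha2 h1 h2).2

lemma famP_order (ha1 : 1/2 < a) (ha2 : a ≤ 2/3) :
    ∀ (n : ℕ) (I I' : ℝ × ℝ) (k k' : ℕ), 0 ≤ I.1 → I.2 ≤ 1/(1-a) →
    0 ≤ I'.1 → I'.2 ≤ 1/(1-a) → k < 2^n → k' < 2^n →
    (k < k' ∨ (k = k' ∧ I.2 ≤ I'.1)) →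
    (famP a n I k).2 ≤ (famP a n I' k').1 := by
  obtain ⟨h0, ha, hma, hb1, hb2, hc1, hia, haa, hbb⟩ := bb_fact ha1 ha2
  intro n
  induction n with
  | zero =>
    intro I I' k k' h1 h2 h1' h2' hk hk' hor
    interval_cases k
    interval_cases k'
    rcases hor with h | ⟨_, h⟩
    · omega
    · exact h
  | succ n ih =>
    intro I I' k k' h1 h2 h1' h2' hk hk' hor
    have hpow : (2:ℕ)^(n+1) = 2*2^n := by rw [pow_succ]; ring
    have hm : k/2 < 2^n := by omega
    have hm' : k'/2 < 2^n := by omega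
    have hs1 := step1_bounds ha1 ha2 h1 h2
    have hs0 := step0_bounds ha1 ha2 h1 h2
    have hs1' := step1_bounds ha1 ha2 h1' h2'
    have hs0' := step0_bounds ha1 ha2 h1' h2'
    rw [famP, famP]
    rcases Nat.mod_two_eq_zero_or_one k with e1 | e1 <;>
      rcases Nat.mod_two_eq_zero_or_one k' with e2 | e2
    · -- both even
      rw [if_pos e1, if_pos e2]
      refine ih _ _ _ _ hs1.1 hs1.2 hs1'.1 hs1'.2 hm hm' ?_
      rcases hor with h | ⟨heq, hle⟩
      · left; omega
      · right
        refine ⟨by omega, ?_⟩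
        simp only [step1]
        have : a * I.2 ≤ a * max I'.1 (1/a) :=
          mul_le_mul_of_nonneg_left (le_trans hle (le_max_left _ _)) h0.le
        linarith
    · -- k even, k' odd
      rw [if_pos e1, if_neg (by omega : ¬ k' % 2 = 0)]
      have hkk : k ≤ k' := by rcases hor with h|⟨h,_⟩ <;> omega
      refine ih _ _ _ _ hs1.1 hs1.2 hs0'.1 hs0'.2 hm hm' ?_
      rcases Nat.lt_or_ge (k/2) (k'/2) with h | h
      · left; exact h
      · right
        have : k/2 = k'/2 := by omega
        refine ⟨this, ?_⟩
        simp only [step1, step0]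
        nlinarith
    · -- k odd, k' even: then k < k' forces k/2 < k'/2
      rw [if_neg (by omega : ¬ k % 2 = 0), if_pos e2]
      have hkk : k < k' := by rcases hor with h|⟨h,_⟩ <;> omega
      refine ih _ _ _ _ hs0.1 hs0.2 hs1'.1 hs1'.2 hm hm' ?_
      left; omega
    · -- both odd
      rw [if_neg (by omega : ¬ k % 2 = 0), if_neg (by omega : ¬ k' % 2 = 0)]
      refine ih _ _ _ _ hs0.1 hs0.2 hs0'.1 hs0'.2 hm hm' ?_
      rcases hor with h | ⟨heq, hle⟩
      · left; omega
      · right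
        refine ⟨by omega, ?_⟩
        simp only [step0]
        nlinarith

end Aux
lemma kappa_ge_iff (a z : ℝ) (n : ℕ) :
    (n : ℕ∞) ≤ kappa a z ↔
      ∀ j, j < n → (Tmap a)^[j] z ∉ Set.Ioo ((2*a-1)/(1-a)) 1 := by
  constructor
  · intro h j hj hmem
    have h2 : kappa a z ≤ (j : ℕ∞) := by
      refine iInf_le_of_le j ?_
      exact iInf_le_of_le hmem le_rfl
    have := le_trans h h2
    rw [Nat.cast_le] at this
    omega
  · intro h
    refine le_iInf fun j => le_iInf fun hj => ?_
    rw [Nat.cast_le]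
    by_contra hc
    exact h j (by omega) hj

lemma Lnat_zero (a z : ℝ) : Lnat a z 0 = 0 := by simp [Lnat]

lemma Lnat_succ (a z : ℝ) (n : ℕ) :
    Lnat a z (n+1) = Lnat a z n + (if (Tmap a)^[n] z < 1 then 1 else 0) := by
  unfold Lnat
  rw [Finset.range_add_one, Finset.filter_insert]
  split
  · rw [Finset.card_insert_of_notMem (by simp)]
  · simp

lemma Lnat_le (a z : ℝ) (n : ℕ) : Lnat a z n ≤ n := by
  unfold Lnat
  exact le_trans (Finset.card_filter_le _ _) (by simp)

lemma fam_witness (a : ℝ) (ha1 : 1/2 < a) (ha2 : a ≤ 2/3) :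
    ∀ (n : ℕ) (I : ℝ × ℝ) (k : ℕ), 0 ≤ I.1 → I.2 ≤ 1/(1-a) → k < 2^n →
    (famP a n I k).1 < (famP a n I k).2 →
    ∃ z, z ∈ Icc (0:ℝ) (1/(1-a)) ∧ (n : ℕ∞) ≤ kappa a z ∧
      Lnat a z n = famL a n I k ∧ (Tmap a)^[n] z ∈ Ico I.1 I.2 := by
  obtain ⟨h0, ha, hma, hb1, hb2, hc1, hia, haa, hbb⟩ := bb_fact ha1 ha2
  intro n
  induction n with
  | zero =>
    intro I k h1 h2 hk hlt
    simp only [famP] at hlt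
    refine ⟨I.1, ⟨h1, le_trans hlt.le h2⟩, ?_, ?_, le_refl _, hlt⟩
    · simp
    · rw [Lnat_zero]; simp [famL]
  | succ n ih =>
    intro I k h1 h2 hk hlt
    have hpow : (2:ℕ)^(n+1) = 2*2^n := by rw [pow_succ]; ring
    have hm : k/2 < 2^n := by omega
    rcases Nat.mod_two_eq_zero_or_one k with e1 | e1
    · -- even: branch 1 (point below 1)
      rw [famP, if_pos e1] at hlt
      have hs1 := step1_bounds ha1 ha2 (I := I) h1 h2
      obtain ⟨z, hz, hκ, hL, hT⟩ := ih (step1 a I) (k/2) hs1.1 hs1.2 hm hlt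
      simp only [step1] at hT
      have hTub : (Tmap a)^[n] z < a * I.2 - 1 := hT.2
      have hc2 : a * I.2 - 1 ≤ (2*a-1)/(1-a) := by nlinarith
      have hlt1 : (Tmap a)^[n] z < 1 := by linarith
      have hiter : (Tmap a)^[n+1] z = ((Tmap a)^[n] z + 1)/a := by
        rw [Function.iterate_succ_apply', Tmap, if_pos hlt1]
      refine ⟨z, hz, ?_, ?_, ?_⟩
      · rw [kappa_ge_iff]
        intro j hj
        rcases Nat.lt_or_ge j n with hjn | hjn
        · exact (kappa_ge_iff a z n).mp hκ j hjn
        · have : j = n := by omega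
          subst this
          rintro ⟨hh1, hh2⟩
          linarith
      · rw [Lnat_succ, if_pos hlt1, famL, if_pos e1, hL]
      · rw [hiter]
        constructor
        · have hmax : a * I.1 ≤ a * max I.1 (1/a) :=
            mul_le_mul_of_nonneg_left (le_max_left _ _) h0.le
          rw [le_div_iff₀ h0]
          have := hT.1
          nlinarith
        · rw [div_lt_iff₀ h0]
          nlinarith
    · -- odd: branch 0 (point at least 1)
      rw [famP, if_neg (by omega : ¬ k % 2 = 0)] at hlt
      have hs0 := step0_bounds ha1 ha2 (I := I) h1 h2
      obtain ⟨z, hz, hκ, hL, hT⟩ := ih (step0 a I) (k/2) hs0.1 hs0.2 hm hlt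
      simp only [step0] at hT
      have hge1 : (1:ℝ) ≤ (Tmap a)^[n] z := by
        have := hT.1
        nlinarith
      have hnlt : ¬ ((Tmap a)^[n] z < 1) := not_lt.mpr hge1
      have hiter : (Tmap a)^[n+1] z = ((Tmap a)^[n] z - 1)/a := by
        rw [Function.iterate_succ_apply', Tmap, if_neg hnlt]
      refine ⟨z, hz, ?_, ?_, ?_⟩
      · rw [kappa_ge_iff]
        intro j hj
        rcases Nat.lt_or_ge j n with hjn | hjn
        · exact (kappa_ge_iff a z n).mp hκ j hjn
        · have : j = n := by omega
          subst this
          rintro ⟨hh1, hh2⟩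
          linarith
      · rw [Lnat_succ, if_neg hnlt, famL, if_neg (by omega : ¬ k % 2 = 0), hL]
        ring
      · rw [hiter]
        constructor
        · rw [le_div_iff₀ h0]
          have := hT.1
          nlinarith
        · rw [div_lt_iff₀ h0]
          nlinarith [hT.2]

lemma sum_evar_icc_le (f : ℝ → ℝ) (S T : ℕ → ℝ) :
    ∀ (N : ℕ) (lo hi : ℝ), lo ≤ hi →
    (∀ k, k < N → lo ≤ S k ∧ T k ≤ hi) →
    (∀ k k', k < k' → k' < N → T k ≤ S k') →
    ∑ k ∈ Finset.range N, eVariationOn f (Icc (S k) (T k))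
      ≤ eVariationOn f (Icc lo hi) := by
  intro N
  induction N with
  | zero => intro lo hi _ _ _; simp
  | succ N ih =>
    intro lo hi hlohi hb hord
    rw [Finset.sum_range_succ]
    rcases le_or_gt (T N) (S N) with hdeg | hnd
    · rw [eVariationOn.subsingleton f (Set.subsingleton_Icc_of_ge hdeg), add_zero]
      exact ih lo hi hlohi (fun k hk => hb k (by omega))
        (fun k k' h1 h2 => hord k k' h1 (by omega))
    · have hloSN : lo ≤ S N := (hb N (by omega)).1
      have hSNhi : S N ≤ hi := le_trans hnd.le (hb N (by omega)).2
      have h1 : ∑ k ∈ Finset.range N, eVariationOn f (Icc (S k) (T k))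
          ≤ eVariationOn f (Icc lo (S N)) := by
        refine ih lo (S N) hloSN (fun k hk => ⟨(hb k (by omega)).1, ?_⟩)
          (fun k k' hh1 hh2 => hord k k' hh1 (by omega))
        exact hord k N hk (by omega)
      have h2 : eVariationOn f (Icc (S N) (T N)) ≤ eVariationOn f (Icc (S N) hi) :=
        eVariationOn.mono f (Icc_subset_Icc le_rfl (hb N (by omega)).2)
      have key : eVariationOn f (Icc lo (S N)) + eVariationOn f (Icc (S N) hi)
          = eVariationOn f (Icc lo hi) := by
        have := eVariationOn.Icc_add_Icc f (s := (Set.univ : Set ℝ)) hloSN hSNhi trivial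
        simpa using this
      calc _ ≤ eVariationOn f (Icc lo (S N)) + eVariationOn f (Icc (S N) hi) :=
            add_le_add h1 h2
        _ = _ := key
theorem P2_iterate_norm_bound
    (a p : ℝ) (ha : a ∈ Set.Ioc (1/2 : ℝ) (2/3)) (hp : p ∈ Set.Ioo (0 : ℝ) 1)
    (n : ℕ) (hn : 1 ≤ n)
    (f : ℝ → ℝ) (hf : BoundedVariationOn f (Set.Icc (0 : ℝ) (1 / (1 - a)))) :
    BVnorm a ((P2op a p)^[n] f)
      ≤ p ^ n *
          sSup {r : ℝ | ∃ x ∈ Set.Icc (0 : ℝ) (1 / (1 - a)),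
            (n : ℕ∞) ≤ kappa a x ∧ r = ((1 - p) / p) ^ (Lnat a x n)} *
          BVnorm a f := by
  obtain ⟨ha1, ha2⟩ := ha
  obtain ⟨hp1, hp2⟩ := hp
  obtain ⟨h0, haa1, hma, hb1, hb2, hc1, hia, haa, hbb⟩ := bb_fact ha1 ha2
  set Mset := {r : ℝ | ∃ x ∈ Set.Icc (0 : ℝ) (1 / (1 - a)),
      (n : ℕ∞) ≤ kappa a x ∧ r = ((1 - p) / p) ^ (Lnat a x n)} with hMset
  set M := sSup Mset with hMdef
  have hqp : 0 ≤ (1-p)/p := div_nonneg (by linarith) hp1.le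
  have hM_bdd : BddAbove Mset := by
    refine ⟨(max 1 ((1-p)/p))^n, ?_⟩
    rintro r ⟨x, hx, hκ, rfl⟩
    calc ((1-p)/p)^(Lnat a x n) ≤ (max 1 ((1-p)/p))^(Lnat a x n) :=
          pow_le_pow_left₀ hqp (le_max_right _ _) _
      _ ≤ (max 1 ((1-p)/p))^n :=
          pow_le_pow_right₀ (le_max_left _ _) (Lnat_le a x n)
  have hone : (1:ℝ) ∈ Mset := by
    have hfix : Tmap a (1/(1-a)) = 1/(1-a) := by
      rw [Tmap, if_neg (not_lt.mpr hbb)]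
      field_simp
      ring
    have hiter : ∀ j : ℕ, (Tmap a)^[j] (1/(1-a)) = 1/(1-a) :=
      fun j => Function.iterate_fixed hfix j
    refine ⟨1/(1-a), ⟨by positivity, le_rfl⟩, ?_, ?_⟩
    · rw [kappa_ge_iff]
      intro j hj hmem
      rw [hiter j] at hmem
      exact absurd hmem.2 (not_lt.mpr hbb)
    · have hL0 : Lnat a (1/(1-a)) n = 0 := by
        unfold Lnat
        rw [Finset.card_eq_zero, Finset.filter_eq_empty_iff]
        intro i _
        rw [hiter i]
        exact not_lt.mpr hbb
      rw [hL0, pow_zero]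
  have hM1 : (1:ℝ) ≤ M := le_csSup hM_bdd hone
  have hpnM : 0 ≤ p^n * M := mul_nonneg (pow_nonneg hp1.le n) (by linarith)
  -- main ENNReal estimate
  have hmain : eVariationOn ((P2op a p)^[n] f) (Icc (0:ℝ) (1/(1-a)))
      ≤ ENNReal.ofReal (p^n * M) * eVariationOn f (Icc (0:ℝ) (1/(1-a))) := by
    refine le_trans (claimA a p ha1 hp1 hp2 f n 0 (1/(1-a))) ?_
    have hterm : ∀ k ∈ Finset.range (2^n),
        ENNReal.ofReal (p^(n - famL a n (0, 1/(1-a)) k) * (1-p)^(famL a n (0, 1/(1-a)) k)) *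
          eVariationOn f (Icc (famP a n (0, 1/(1-a)) k).1 (famP a n (0, 1/(1-a)) k).2)
        ≤ ENNReal.ofReal (p^n * M) *
          eVariationOn f (Icc (famP a n (0, 1/(1-a)) k).1 (famP a n (0, 1/(1-a)) k).2) := by
      intro k hk
      rw [Finset.mem_range] at hk
      by_cases hnd : (famP a n (0, 1/(1-a)) k).1 < (famP a n (0, 1/(1-a)) k).2
      · refine mul_le_mul_left (ENNReal.ofReal_le_ofReal ?_) _
        obtain ⟨z, hz, hκ, hL, _⟩ :=
          fam_witness a ha1 ha2 n (0, 1/(1-a)) k le_rfl le_rfl hk hnd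
        have hmem : ((1-p)/p)^(famL a n (0, 1/(1-a)) k) ∈ Mset := by
          exact ⟨z, hz, hκ, by rw [hL]⟩
        have hle : ((1-p)/p)^(famL a n (0, 1/(1-a)) k) ≤ M := le_csSup hM_bdd hmem
        set ℓ := famL a n (0, 1/(1-a)) k with hℓ
        have hℓn : ℓ ≤ n := famL_le a n _ k
        have heq : p^(n - ℓ) * (1-p)^ℓ = p^n * ((1-p)/p)^ℓ := by
          have hpn : p^n = p^(n-ℓ) * p^ℓ := by
            rw [← pow_add]; congr 1; omega
          rw [hpn, div_pow]
          field_simp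
        rw [heq]
        exact mul_le_mul_of_nonneg_left hle (pow_nonneg hp1.le n)
      · rw [eVariationOn.subsingleton f (Set.subsingleton_Icc_of_ge (not_lt.mp hnd))]
        simp
    refine le_trans (Finset.sum_le_sum hterm) ?_
    rw [← Finset.mul_sum]
    refine mul_le_mul_right ?_ _
    refine sum_evar_icc_le f _ _ (2^n) 0 (1/(1-a)) (by linarith) ?_ ?_
    · intro k _
      exact famP_bounds ha1 ha2 n (0, 1/(1-a)) k le_rfl le_rfl
    · intro k k' hkk' hk'
      exact famP_order ha1 ha2 n (0, 1/(1-a)) (0, 1/(1-a)) k k' le_rfl le_rfl le_rfl le_rfl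
        (by omega) hk' (Or.inl hkk')
  -- value at zero
  obtain ⟨m, rfl⟩ : ∃ m, n = m + 1 := ⟨n - 1, by omega⟩
  have hv0 : (P2op a p)^[m+1] f 0 = 0 := by
    rw [Function.iterate_succ_apply']
    have hnle : ¬ (1/a ≤ (0:ℝ)) := not_le.mpr (by positivity)
    simp only [P2op, mul_zero, zero_add, if_neg hnle, sub_self, add_zero]
  have hfin : ENNReal.ofReal (p^(m+1) * M) * eVariationOn f (Icc (0:ℝ) (1/(1-a))) ≠ ⊤ :=
    ENNReal.mul_ne_top ENNReal.ofReal_ne_top hf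
  have htr := ENNReal.toReal_mono hfin hmain
  rw [ENNReal.toReal_mul, ENNReal.toReal_ofReal hpnM] at htr
  have hBV : BVnorm a ((P2op a p)^[m+1] f)
      = (eVariationOn ((P2op a p)^[m+1] f) (Icc (0:ℝ) (1/(1-a)))).toReal := by
    rw [BVnorm, hv0, abs_zero, zero_add]
  rw [hBV, BVnorm]
  have habs : 0 ≤ |f 0| := abs_nonneg _
  have hE : 0 ≤ (eVariationOn f (Icc (0:ℝ) (1/(1-a)))).toReal := ENNReal.toReal_nonneg
  calc (eVariationOn ((P2op a p)^[m+1] f) (Icc (0:ℝ) (1/(1-a)))).toReal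
      ≤ p^(m+1) * M * (eVariationOn f (Icc (0:ℝ) (1/(1-a)))).toReal := htr
    _ ≤ p^(m+1) * M * (|f 0| + (eVariationOn f (Set.Icc (0:ℝ) (1/(1-a)))).toReal) := by
        nlinarith
end
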